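/- The AV-guarantee of Limited Voting is 0: for every real ε > 0, there exist an election E = (N, C, k, l, A, L) and a winning committee W ∈ LV(E) such that s_AV(W) < ε · max_{W' ⊆ C, |W'| = k} s_AV(W'). -/

import Mathlib

open Finset

/-- An election `E = (N, C, k, l, A, L)`: voters form the finite type `V`,
candidates the finite type `C`, `k` is the committee size, `l` the ballot limit,
`A i` is the approval set of voter `i` and `L i` their ballot. -/
structure Election (V C : Type*) [Fintype V] [DecidableEq V] [Fintype C] [DecidableEq C] where
  k : ℕ
  l : ℕ
  A : V → Finset C
  L : V → Finset C
  k_le_card : k ≤ Fintype.card C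
  one_le_l : 1 ≤ l
  l_le_k : l ≤ k
  ballot_card : ∀ i, (L i).card = l
  ballot_sub_approval : ∀ i, l ≤ (A i).card → L i ⊆ A i
  approval_ssub_ballot : ∀ i, (A i).card < l → A i ⊂ L i

variable {V C : Type*} [Fintype V] [DecidableEq V] [Fintype C] [DecidableEq C]

/-- The LV-score of a candidate: the number of voters whose ballot contains it. -/
def sLVc (E : Election V C) (c : C) : ℕ := (univ.filter fun i => c ∈ E.L i).card

/-- The AV-score of a candidate: the number of voters approving it. -/
def sAVc (E : Election V C) (c : C) : ℕ := (univ.filter fun i => c ∈ E.A i).card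

/-- The LV-score of a committee. -/
def sLV (E : Election V C) (W : Finset C) : ℕ := ∑ c ∈ W, sLVc E c

/-- The AV-score of a committee. -/
def sAV (E : Election V C) (W : Finset C) : ℕ := ∑ c ∈ W, sAVc E c

/-- The winning committees of Limited Voting: size-`k` committees maximizing the LV-score. -/
def LVwin (E : Election V C) : Set (Finset C) :=
  {W | W.card = E.k ∧ ∀ W' : Finset C, W'.card = E.k → sLV E W' ≤ sLV E W}

/-- The winning committees of Approval Voting: size-`k` committees maximizing the AV-score. -/
def AVwin (E : Election V C) : Set (Finset C) :=
  {W | W.card = E.k ∧ ∀ W' : Finset C, W'.card = E.k → sAV E W' ≤ sAV E W}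

/-- The Chamberlin–Courant score of a committee: the number of represented voters. -/
def sCC (E : Election V C) (W : Finset C) : ℕ :=
  (univ.filter fun i => (W ∩ E.A i).Nonempty).card

/-- `A` is a party-list profile: approval sets are nonempty and pairwise equal or disjoint. -/
def PartyList (E : Election V C) : Prop :=
  (∀ i, (E.A i).Nonempty) ∧ ∀ i j : V, E.A i = E.A j ∨ E.A i ∩ E.A j = ∅

/-- `E` is consistent with some broadcasting (linear) order on candidates, encoded by an
injective priority function `f` (`f c < f c'` meaning `c ≻ c'`). -/
def Broadcasted (E : Election V C) : Prop :=
  ∃ f : C → ℕ, Function.Injective f ∧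
    ∀ (i : V) (c c' : C), c ∈ E.A i → c' ∈ E.A i → c ∈ E.L i → c' ∉ E.L i → f c < f c'

/-- The number of voters of party `Pj`. -/
def nParty (E : Election V C) (Pj : Finset C) : ℕ := (univ.filter fun i => E.A i = Pj).card


def myE (m : ℕ) : Election (Fin (m+2)) (Fin (m+1)) where
  k := 1
  l := 1
  A i := if (i:ℕ) < m then ({0}ᶜ : Finset (Fin (m+1))) else {0}
  L i := if h : (i:ℕ) < m then {(⟨(i:ℕ)+1, by omega⟩ : Fin (m+1))} else {0}
  k_le_card := by simp
  one_le_l := le_refl 1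
  l_le_k := le_refl 1
  ballot_card := by intro i; split <;> simp
  ballot_sub_approval := by
    intro i _
    by_cases h : (i:ℕ) < m <;> simp [h]
  approval_ssub_ballot := by
    intro i h
    exfalso
    by_cases h' : (i:ℕ) < m <;> simp [h', Finset.card_compl] at h
    omega

lemma filter0 (m : ℕ) :
    ((univ : Finset (Fin (m+2))).filter fun i : Fin (m+2) => ¬ ((i:ℕ) < m)) =
      {(⟨m, by omega⟩ : Fin (m+2)), ⟨m+1, by omega⟩} := by
  ext i
  simp only [mem_filter, mem_univ, true_and, mem_insert, mem_singleton, Fin.ext_iff]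
  constructor
  · intro h; omega
  · rintro (h | h) <;> omega

lemma sLVc0 (m : ℕ) : sLVc (myE m) 0 = 2 := by
  have h : ((univ : Finset (Fin (m+2))).filter fun i => (0 : Fin (m+1)) ∈ (myE m).L i)
      = (univ : Finset (Fin (m+2))).filter fun i : Fin (m+2) => ¬ ((i:ℕ) < m) := by
    apply filter_congr
    intro i _
    by_cases h : (i:ℕ) < m <;> simp [myE, h]
  rw [sLVc, h, filter0]
  rw [card_insert_of_notMem (by simp [Fin.ext_iff]), card_singleton]

lemma sAVc0 (m : ℕ) : sAVc (myE m) 0 = 2 := by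
  have h : ((univ : Finset (Fin (m+2))).filter fun i => (0 : Fin (m+1)) ∈ (myE m).A i)
      = (univ : Finset (Fin (m+2))).filter fun i : Fin (m+2) => ¬ ((i:ℕ) < m) := by
    apply filter_congr
    intro i _
    by_cases h : (i:ℕ) < m <;> simp [myE, h]
  rw [sAVc, h, filter0]
  rw [card_insert_of_notMem (by simp [Fin.ext_iff]), card_singleton]

lemma sLVc_le (m : ℕ) (c : Fin (m+1)) : sLVc (myE m) c ≤ 2 := by
  rcases eq_or_ne c 0 with rfl | hc
  · exact (sLVc0 m).le
  · refine le_trans (Finset.card_le_one.mpr ?_) one_le_two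
    intro a ha b hb
    rw [mem_filter] at ha hb
    simp only [mem_filter, mem_univ, true_and, myE] at ha hb
    by_cases h : (a:ℕ) < m
    · by_cases h' : (b:ℕ) < m
      · simp only [h, h', dif_pos] at ha hb
        simp only [mem_singleton] at ha hb
        have : (c:ℕ) = (a:ℕ)+1 := by rw [ha]
        have : (c:ℕ) = (b:ℕ)+1 := by rw [hb]
        apply Fin.ext; omega
      · simp only [h', dif_neg, not_false_iff, mem_singleton] at hb
        exact absurd hb hc
    · simp only [h, dif_neg, not_false_iff, mem_singleton] at ha
      exact absurd ha hc

lemma sAVc_ne (m : ℕ) (c : Fin (m+1)) (hc : c ≠ 0) : sAVc (myE m) c = m := by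
  have h : ((univ : Finset (Fin (m+2))).filter fun i => c ∈ (myE m).A i)
      = (Finset.range m).attachFin (fun a ha => by
          simp only [Finset.mem_range] at ha; omega) := by
    ext i
    simp only [mem_filter, mem_univ, true_and, Finset.mem_attachFin, Finset.mem_range]
    by_cases h : (i:ℕ) < m <;> simp [myE, h, hc]
  rw [sAVc, h, Finset.card_attachFin, Finset.card_range]

/-- The AV-guarantee of Limited Voting is 0: for every `ε > 0` there are an
election and an LV-winning committee `W` with
`s_AV(W) < ε · max_{|W'| = k} s_AV(W')`. -/
theorem stmt18 :
    ∀ ε : ℝ, 0 < ε →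
      ∃ (nV nC : ℕ) (E : Election (Fin nV) (Fin nC)),
        ∃ W ∈ LVwin E, ∃ Wmax : Finset (Fin nC), Wmax.card = E.k ∧
          (∀ W' : Finset (Fin nC), W'.card = E.k → sAV E W' ≤ sAV E Wmax) ∧
          (sAV E W : ℝ) < ε * (sAV E Wmax : ℝ) := by
  intro ε hε
  obtain ⟨m, hm2, hmε⟩ : ∃ m : ℕ, 2 ≤ m ∧ (2:ℝ) < ε * m := by
    refine ⟨max 2 ⌈3/ε⌉₊, le_max_left _ _, ?_⟩
    have h1 : (3:ℝ)/ε ≤ (⌈3/ε⌉₊ : ℕ) := Nat.le_ceil _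
    have h2 : ((⌈3/ε⌉₊:ℕ):ℝ) ≤ ((max 2 ⌈3/ε⌉₊ : ℕ) : ℝ) := by
      exact_mod_cast le_max_right 2 _
    have h3 : (3:ℝ) ≤ (max 2 ⌈3/ε⌉₊ : ℕ) * ε := (div_le_iff₀ hε).mp (h1.trans h2)
    nlinarith
  have h1ne0 : (1 : Fin (m+1)) ≠ 0 := by
    have : (1 : Fin (m+1)).val = 1 := by
      simp [Fin.val_one, Nat.mod_eq_of_lt]; omega
    intro h; rw [h] at this; simp at this
  refine ⟨m+2, m+1, myE m, {0}, ⟨by simp [myE], ?_⟩, {1}, by simp [myE], ?_, ?_⟩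
  · intro W' hW'
    obtain ⟨c, rfl⟩ := Finset.card_eq_one.mp hW'
    simp only [sLV, Finset.sum_singleton]
    rw [sLVc0]
    exact sLVc_le m c
  · intro W' hW'
    obtain ⟨c, rfl⟩ := Finset.card_eq_one.mp hW'
    simp only [sAV, Finset.sum_singleton]
    rw [sAVc_ne m 1 h1ne0]
    rcases eq_or_ne c 0 with rfl | hc
    · rw [sAVc0]; exact hm2
    · rw [sAVc_ne m c hc]
  · simp only [sAV, Finset.sum_singleton]
    rw [sAVc0, sAVc_ne m 1 h1ne0]
    exact_mod_cast hmε
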